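/- Let n ≥ 1 and 0 < s < 1. For t > 0 let h_t(x) = (4πt)^{-n/2} exp(−‖x‖²/(4t)) be the heat kernel on ℝⁿ. Then there exists a constant C > 0, depending only on n and s, such that for every t > 0, ∫_{ℝⁿ} ∫_{ℝⁿ} |h_t(x) − h_t(x−y)| ‖y‖^{-n-s} dy dx ≤ C t^{-s/2}. -/

import Mathlib

open MeasureTheory Metric ENNReal Real Filter Set

section HeatKernelAux

variable {n : ℕ}

/-- Scaling change of variables for lower Lebesgue integrals on Euclidean space. -/
lemma heatAux_lint_smul (f : EuclideanSpace ℝ (Fin n) → ℝ≥0∞) (hf : Measurable f) {r : ℝ}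
    (hr : 0 < r) :
    ∫⁻ x, f x = ENNReal.ofReal (r ^ n) * ∫⁻ x, f (r • x) := by
  have h1 : ∫⁻ x, f (r • x)
      = ∫⁻ y, f y ∂(Measure.map (r • ·) (volume : Measure (EuclideanSpace ℝ (Fin n)))) := by
    rw [lintegral_map hf (measurable_const_smul r)]
  rw [h1, Measure.map_addHaar_smul volume hr.ne', lintegral_smul_measure, smul_eq_mul,
    finrank_euclideanSpace_fin, abs_of_nonneg (by positivity), ← mul_assoc,
    ← ENNReal.ofReal_mul (by positivity), mul_inv_cancel₀ (by positivity), ENNReal.ofReal_one,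
    one_mul]

lemma heatAux_gauss_integrable {b : ℝ} (hb : 0 < b) :
    Integrable (fun x : EuclideanSpace ℝ (Fin n) => Real.exp (-b * ‖x‖ ^ 2)) := by
  have h := (GaussianFourier.integrable_cexp_neg_mul_sq_norm_add (V := EuclideanSpace ℝ (Fin n))
    (b := (b : ℂ)) (by simpa using hb) 0 0).norm
  refine h.congr (Eventually.of_forall fun x => ?_)
  simp [Complex.norm_exp]
  norm_cast
  left; rfl

lemma heatAux_exp_diff_le (a b : ℝ) :
    |Real.exp (-a) - Real.exp (-b)| ≤ |a - b| * max (Real.exp (-a)) (Real.exp (-b)) := by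
  rcases le_total a b with h | h
  · rw [abs_of_nonneg (by simp only [sub_nonneg]; exact Real.exp_le_exp.2 (by linarith)),
      abs_of_nonpos (by linarith),
      max_eq_left (Real.exp_le_exp.2 (by linarith))]
    have h2 : Real.exp (-b) = Real.exp (-a) * Real.exp (-(b - a)) := by
      rw [← Real.exp_add]; ring_nf
    rw [h2]
    have h3 : 1 - Real.exp (-(b-a)) ≤ b - a := by
      have := Real.add_one_le_exp (-(b-a)); linarith
    nlinarith [Real.exp_pos (-a), Real.exp_nonneg (-(b-a))]
  · rw [abs_of_nonpos (by simp only [sub_nonpos]; exact Real.exp_le_exp.2 (by linarith)),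
      abs_of_nonneg (by linarith),
      max_eq_right (Real.exp_le_exp.2 (by linarith))]
    have h2 : Real.exp (-a) = Real.exp (-b) * Real.exp (-(a - b)) := by
      rw [← Real.exp_add]; ring_nf
    rw [h2]
    have h3 : 1 - Real.exp (-(a-b)) ≤ a - b := by
      have := Real.add_one_le_exp (-(a-b)); linarith
    nlinarith [Real.exp_pos (-b), Real.exp_nonneg (-(a-b))]

lemma heatAux_small_y {E : Type*} [NormedAddCommGroup E] (c : ℝ) (hc : 0 ≤ c) (x y : E)
    (hy : ‖y‖ ≤ 1) :
    |c * Real.exp (-‖x‖ ^ 2 / 4) - c * Real.exp (-‖x - y‖ ^ 2 / 4)|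
      ≤ ‖y‖ * (c * Real.exp (9/2) * Real.exp (-‖x‖ ^ 2 / 8)) := by
  have hr : (0:ℝ) ≤ ‖x‖ := norm_nonneg _
  have hd : (0:ℝ) ≤ ‖x - y‖ := norm_nonneg _
  have hu : (0:ℝ) ≤ ‖y‖ := norm_nonneg _
  have hrd : |‖x‖ - ‖x - y‖| ≤ ‖y‖ := by
    have := abs_norm_sub_norm_le x (x - y)
    simpa using this
  set r := ‖x‖ with hrdef
  set d := ‖x - y‖ with hddef
  set u := ‖y‖ with hudef
  have habs : |r ^ 2 / 4 - d ^ 2 / 4| ≤ u * (2 * r + 1) / 4 := by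
    have hnn : (0:ℝ) ≤ (r + d) / 4 := by linarith
    have h1 : |r ^ 2 / 4 - d ^ 2 / 4| = |r - d| * ((r + d) / 4) := by
      rw [show r ^ 2 / 4 - d ^ 2 / 4 = (r - d) * ((r + d) / 4) by ring, abs_mul,
        abs_of_nonneg hnn]
    have hdle : d ≤ r + 1 := by
      have h2 := (abs_le.1 hrd).1
      linarith
    rw [h1, show u * (2 * r + 1) / 4 = u * ((2 * r + 1) / 4) by ring]
    exact mul_le_mul hrd (by linarith) hnn hu
  have hmax : max (Real.exp (-(r ^ 2 / 4))) (Real.exp (-(d ^ 2 / 4)))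
      ≤ Real.exp ((2 * r - r ^ 2) / 4) := by
    have := abs_le.1 hrd
    apply max_le <;> refine Real.exp_le_exp.2 ?_
    · nlinarith
    · rcases le_total d r with h | h
      · nlinarith
      · nlinarith
  have hscal : u * (2 * r + 1) / 4 * Real.exp ((2 * r - r ^ 2) / 4)
      ≤ u * (Real.exp (9/2) * Real.exp (-r ^ 2 / 8)) := by
    have h1 : (2 * r + 1) / 4 ≤ Real.exp r := by
      have := Real.add_one_le_exp r; linarith
    calc u * (2 * r + 1) / 4 * Real.exp ((2 * r - r ^ 2) / 4)
        = u * ((2 * r + 1) / 4 * Real.exp ((2 * r - r ^ 2) / 4)) := by ring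
      _ ≤ u * (Real.exp r * Real.exp ((2 * r - r ^ 2) / 4)) := by
          apply mul_le_mul_of_nonneg_left _ hu
          exact mul_le_mul_of_nonneg_right h1 (Real.exp_nonneg _)
      _ = u * Real.exp (r + (2 * r - r ^ 2) / 4) := by rw [← Real.exp_add]
      _ ≤ u * Real.exp (9/2 + -r ^ 2 / 8) := by
          apply mul_le_mul_of_nonneg_left _ hu
          refine Real.exp_le_exp.2 ?_
          nlinarith [sq_nonneg (r - 6)]
      _ = u * (Real.exp (9/2) * Real.exp (-r ^ 2 / 8)) := by rw [← Real.exp_add]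
  calc |c * Real.exp (-r ^ 2 / 4) - c * Real.exp (-d ^ 2 / 4)|
      = c * |Real.exp (-(r ^ 2 / 4)) - Real.exp (-(d ^ 2 / 4))| := by
        rw [← mul_sub, abs_mul, abs_of_nonneg hc]
        norm_num [neg_div]
    _ ≤ c * (|r ^ 2 / 4 - d ^ 2 / 4| * max (Real.exp (-(r ^ 2 / 4))) (Real.exp (-(d ^ 2 / 4)))) := by
        exact mul_le_mul_of_nonneg_left (heatAux_exp_diff_le _ _) hc
    _ ≤ c * (u * (2 * r + 1) / 4 * Real.exp ((2 * r - r ^ 2) / 4)) := by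
        apply mul_le_mul_of_nonneg_left _ hc
        exact mul_le_mul habs hmax ((Real.exp_nonneg _).trans (le_max_left _ _))
          (div_nonneg (mul_nonneg hu (by linarith)) (by norm_num))
    _ ≤ c * (u * (Real.exp (9/2) * Real.exp (-r ^ 2 / 8))) := mul_le_mul_of_nonneg_left hscal hc
    _ = u * (c * Real.exp (9/2) * Real.exp (-r ^ 2 / 8)) := by ring

lemma heatAux_A_fin (hn : 1 ≤ n) {p : ℝ} (hpn : -(n : ℝ) < p) (hp0 : p < 0) :
    ∫⁻ y : EuclideanSpace ℝ (Fin n) in ball (0 : EuclideanSpace ℝ (Fin n)) 1,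
      ENNReal.ofReal (‖y‖ ^ p) < ∞ := by
  haveI : Nonempty (Fin n) := ⟨⟨0, hn⟩⟩
  haveI : Nontrivial (EuclideanSpace ℝ (Fin n)) := inferInstance
  set μ := (volume : Measure (EuclideanSpace ℝ (Fin n))).restrict
    (ball (0 : EuclideanSpace ℝ (Fin n)) 1) with hμ
  have hmble : AEMeasurable (fun y : EuclideanSpace ℝ (Fin n) => ‖y‖ ^ p) μ := by
    apply Measurable.aemeasurable
    fun_prop
  rw [show (∫⁻ y : EuclideanSpace ℝ (Fin n) in ball (0 : EuclideanSpace ℝ (Fin n)) 1,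
      ENNReal.ofReal (‖y‖ ^ p)) = ∫⁻ y, ENNReal.ofReal (‖y‖ ^ p) ∂μ from rfl,
    lintegral_eq_lintegral_meas_le μ
      (Eventually.of_forall fun y => Real.rpow_nonneg (norm_nonneg _) _) hmble]
  set volB := (volume : Measure (EuclideanSpace ℝ (Fin n)))
    (ball (0 : EuclideanSpace ℝ (Fin n)) 1) with hvolB
  have hvolB_fin : volB < ∞ := measure_ball_lt_top
  have key : ∀ t : ℝ, 0 < t → μ {a | t ≤ ‖a‖ ^ p}
      ≤ min volB (ENNReal.ofReal (t ^ ((n : ℝ) * p⁻¹)) * volB) := by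
    intro t ht
    refine le_min ?_ ?_
    · exact (measure_mono (subset_univ _)).trans (by rw [Measure.restrict_apply_univ])
    · have hsub : {a : EuclideanSpace ℝ (Fin n) | t ≤ ‖a‖ ^ p}
          ⊆ closedBall 0 (t ^ p⁻¹) := by
        intro a ha
        simp only [mem_setOf_eq] at ha
        have ha0 : a ≠ 0 := by
          rintro rfl
          rw [norm_zero, Real.zero_rpow hp0.ne] at ha
          linarith
        have hna : 0 < ‖a‖ := norm_pos_iff.2 ha0
        have h1 : ‖a‖ = (‖a‖ ^ p) ^ p⁻¹ := by
          rw [← Real.rpow_mul (norm_nonneg a), mul_inv_cancel₀ hp0.ne, Real.rpow_one]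
        rw [mem_closedBall, dist_zero_right, h1]
        exact Real.rpow_le_rpow_of_nonpos ht ha (inv_nonpos.2 hp0.le)
      calc μ {a : EuclideanSpace ℝ (Fin n) | t ≤ ‖a‖ ^ p}
          ≤ volume (closedBall (0 : EuclideanSpace ℝ (Fin n)) (t ^ p⁻¹)) :=
            (Measure.restrict_apply_le _ _).trans (measure_mono hsub)
        _ = ENNReal.ofReal ((t ^ p⁻¹) ^ (Module.finrank ℝ (EuclideanSpace ℝ (Fin n)))) * volB := by
            rw [Measure.addHaar_closedBall _ _ (by positivity)]
        _ = ENNReal.ofReal (t ^ ((n : ℝ) * p⁻¹)) * volB := by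
            rw [finrank_euclideanSpace_fin, ← Real.rpow_natCast (t ^ p⁻¹) n,
              ← Real.rpow_mul ht.le, mul_comm p⁻¹]
  calc ∫⁻ t in Ioi (0:ℝ), μ {a | t ≤ ‖a‖ ^ p}
      ≤ ∫⁻ t in Ioc (0:ℝ) 1 ∪ Ioi 1, μ {a | t ≤ ‖a‖ ^ p} :=
        lintegral_mono_set Ioi_subset_Ioc_union_Ioi
    _ ≤ (∫⁻ t in Ioc (0:ℝ) 1, μ {a | t ≤ ‖a‖ ^ p}) + ∫⁻ t in Ioi 1, μ {a | t ≤ ‖a‖ ^ p} :=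
        lintegral_union_le _ _ _
    _ < ∞ := by
        apply ENNReal.add_lt_top.2
        constructor
        · calc ∫⁻ t in Ioc (0:ℝ) 1, μ {a | t ≤ ‖a‖ ^ p}
              ≤ ∫⁻ _ in Ioc (0:ℝ) 1, volB := by
                refine setLIntegral_mono' measurableSet_Ioc fun t ht => ?_
                exact (key t ht.1).trans (min_le_left _ _)
            _ = volB * volume (Ioc (0:ℝ) 1) := setLIntegral_const _ _
            _ < ∞ := ENNReal.mul_lt_top hvolB_fin (by simp)
        · have hexp : (n : ℝ) * p⁻¹ < -1 := by
            rw [← div_eq_mul_inv, div_lt_iff_of_neg hp0]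
            linarith
          calc ∫⁻ t in Ioi (1:ℝ), μ {a | t ≤ ‖a‖ ^ p}
              ≤ ∫⁻ t in Ioi (1:ℝ), ENNReal.ofReal (t ^ ((n : ℝ) * p⁻¹)) * volB := by
                refine setLIntegral_mono' measurableSet_Ioi fun t ht => ?_
                exact (key t (lt_trans one_pos ht)).trans (min_le_right _ _)
            _ = (∫⁻ t in Ioi (1:ℝ), ENNReal.ofReal (t ^ ((n : ℝ) * p⁻¹))) * volB :=
                lintegral_mul_const' _ _ hvolB_fin.ne
            _ < ∞ := by
                apply ENNReal.mul_lt_top _ hvolB_fin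
                exact (integrableOn_Ioi_rpow_of_lt hexp one_pos).setLIntegral_lt_top

lemma heatAux_B_fin (hn : 1 ≤ n) {s : ℝ} (hs : 0 < s) :
    ∫⁻ y : EuclideanSpace ℝ (Fin n) in (ball (0 : EuclideanSpace ℝ (Fin n)) 1)ᶜ,
      ENNReal.ofReal (‖y‖ ^ (-(n : ℝ) - s)) < ∞ := by
  set r : ℝ := (n : ℝ) + s with hrdef
  have hr0 : 0 < r := by positivity
  have hb : ∀ y : EuclideanSpace ℝ (Fin n), y ∈ (ball (0 : EuclideanSpace ℝ (Fin n)) 1)ᶜ →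
      ENNReal.ofReal (‖y‖ ^ (-(n : ℝ) - s))
        ≤ ENNReal.ofReal ((2:ℝ) ^ r * (1 + ‖y‖) ^ (-r)) := by
    intro y hy
    have h1 : (1:ℝ) ≤ ‖y‖ := by
      simpa [dist_zero_right] using (mem_compl_iff _ _).1 hy
    apply ENNReal.ofReal_le_ofReal
    have h2 : (2 * ‖y‖ : ℝ) ^ (-r) ≤ (1 + ‖y‖) ^ (-r) :=
      Real.rpow_le_rpow_of_nonpos (by linarith) (by linarith) (by linarith)
    have h3 : (2 * ‖y‖ : ℝ) ^ (-r) = 2 ^ (-r) * ‖y‖ ^ (-r) :=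
      Real.mul_rpow (by norm_num) (by linarith)
    have h4 : ‖y‖ ^ (-(n : ℝ) - s) = 2 ^ r * (2 * ‖y‖) ^ (-r) := by
      rw [h3, ← mul_assoc, ← Real.rpow_add (by norm_num : (0:ℝ) < 2)]
      simp [hrdef]
      ring_nf
    rw [h4]
    exact mul_le_mul_of_nonneg_left h2 (by positivity)
  calc ∫⁻ y : EuclideanSpace ℝ (Fin n) in (ball (0 : EuclideanSpace ℝ (Fin n)) 1)ᶜ,
        ENNReal.ofReal (‖y‖ ^ (-(n : ℝ) - s))
      ≤ ∫⁻ y : EuclideanSpace ℝ (Fin n) in (ball (0 : EuclideanSpace ℝ (Fin n)) 1)ᶜ,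
        ENNReal.ofReal ((2:ℝ) ^ r * (1 + ‖y‖) ^ (-r)) := setLIntegral_mono' (by measurability) hb
    _ ≤ ∫⁻ y : EuclideanSpace ℝ (Fin n), ENNReal.ofReal ((2:ℝ) ^ r * (1 + ‖y‖) ^ (-r)) :=
        setLIntegral_le_lintegral _ _
    _ = ENNReal.ofReal ((2:ℝ) ^ r) * ∫⁻ y : EuclideanSpace ℝ (Fin n),
        ENNReal.ofReal ((1 + ‖y‖) ^ (-r)) := by
        simp_rw [ENNReal.ofReal_mul (by positivity : (0:ℝ) ≤ (2:ℝ)^r)]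
        rw [lintegral_const_mul' _ _ ENNReal.ofReal_ne_top]
    _ < ∞ := by
        apply ENNReal.mul_lt_top ENNReal.ofReal_lt_top
        apply finite_integral_one_add_norm
        rw [finrank_euclideanSpace_fin]
        simp [hrdef, hs]

/-- The heat kernel at time 1. -/
noncomputable def heatAux_hh (n : ℕ) (x : EuclideanSpace ℝ (Fin n)) : ℝ :=
  (4 * Real.pi) ^ (-(n : ℝ) / 2) * Real.exp (-‖x‖ ^ 2 / 4)

/-- Gaussian majorant for increments of the heat kernel at time 1. -/
noncomputable def heatAux_GG (n : ℕ) (x : EuclideanSpace ℝ (Fin n)) : ℝ :=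
  (4 * Real.pi) ^ (-(n : ℝ) / 2) * Real.exp (9/2) * Real.exp (-‖x‖ ^ 2 / 8)

lemma heatAux_hh_meas : Measurable (heatAux_hh n) := by unfold heatAux_hh; fun_prop
lemma heatAux_GG_meas : Measurable (heatAux_GG n) := by unfold heatAux_GG; fun_prop
lemma heatAux_hh_nonneg (x : EuclideanSpace ℝ (Fin n)) : 0 ≤ heatAux_hh n x := by
  unfold heatAux_hh; positivity

lemma heatAux_hh_integrable : Integrable (heatAux_hh n) := by
  have := Integrable.const_mul (heatAux_gauss_integrable (n := n) (show (0:ℝ) < 1/4 by norm_num))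
    ((4 * Real.pi) ^ (-(n : ℝ) / 2))
  refine this.congr (Eventually.of_forall fun x => ?_)
  unfold heatAux_hh; ring_nf

lemma heatAux_GG_integrable : Integrable (heatAux_GG n) := by
  have := Integrable.const_mul (heatAux_gauss_integrable (n := n) (show (0:ℝ) < 1/8 by norm_num))
    ((4 * Real.pi) ^ (-(n : ℝ) / 2) * Real.exp (9/2))
  refine this.congr (Eventually.of_forall fun x => ?_)
  unfold heatAux_GG; ring_nf

lemma heatAux_I1_lt_top (hn : 1 ≤ n) {s : ℝ} (hs0 : 0 < s) (hs1 : s < 1) :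
    (∫⁻ x : EuclideanSpace ℝ (Fin n), ∫⁻ y : EuclideanSpace ℝ (Fin n),
      ENNReal.ofReal (|heatAux_hh n x - heatAux_hh n (x - y)| * ‖y‖ ^ (-(n : ℝ) - s))) < ∞ := by
  have hn' : (1:ℝ) ≤ (n:ℝ) := by exact_mod_cast hn
  set E := EuclideanSpace ℝ (Fin n)
  set S : Set E := ball (0 : E) 1 with hS
  set w : E → ℝ := fun y => ‖y‖ ^ (-(n : ℝ) - s) with hw
  have hw_meas : Measurable w := by fun_prop
  have hw_nonneg : ∀ y, 0 ≤ w y := fun y => Real.rpow_nonneg (norm_nonneg _) _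
  set A : ℝ≥0∞ := ∫⁻ y : E in S, ENNReal.ofReal (‖y‖ ^ (1 - (n : ℝ) - s)) with hA
  set B : ℝ≥0∞ := ∫⁻ y : E in Sᶜ, ENNReal.ofReal (w y) with hB
  set Kh : ℝ≥0∞ := ∫⁻ x : E, ENNReal.ofReal (heatAux_hh n x) with hKh
  set KG : ℝ≥0∞ := ∫⁻ x : E, ENNReal.ofReal (heatAux_GG n x) with hKG
  have hA_fin : A < ∞ := heatAux_A_fin hn (by push_cast; linarith) (by push_cast; linarith)
  have hB_fin : B < ∞ := heatAux_B_fin hn hs0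
  have hKh_fin : Kh < ∞ := (heatAux_hh_integrable (n := n)).lintegral_lt_top
  have hKG_fin : KG < ∞ := (heatAux_GG_integrable (n := n)).lintegral_lt_top
  have inner_bd : ∀ x : E, (∫⁻ y : E, ENNReal.ofReal (|heatAux_hh n x - heatAux_hh n (x - y)| * w y))
      ≤ ENNReal.ofReal (heatAux_GG n x) * A + (ENNReal.ofReal (heatAux_hh n x) * B
        + ∫⁻ y : E in Sᶜ, ENNReal.ofReal (heatAux_hh n (x - y)) * ENNReal.ofReal (w y)) := by
    intro x
    have hsplit : (∫⁻ y : E, ENNReal.ofReal (|heatAux_hh n x - heatAux_hh n (x - y)| * w y))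
        = (∫⁻ y : E in S, ENNReal.ofReal (|heatAux_hh n x - heatAux_hh n (x - y)| * w y))
          + ∫⁻ y : E in Sᶜ, ENNReal.ofReal (|heatAux_hh n x - heatAux_hh n (x - y)| * w y) :=
      (lintegral_add_compl _ measurableSet_ball).symm
    rw [hsplit]
    gcongr
    · calc (∫⁻ y : E in S, ENNReal.ofReal (|heatAux_hh n x - heatAux_hh n (x - y)| * w y))
          ≤ ∫⁻ y : E in S, ENNReal.ofReal (heatAux_GG n x)
              * ENNReal.ofReal (‖y‖ ^ (1 - (n : ℝ) - s)) := by
            refine setLIntegral_mono' measurableSet_ball fun y hy => ?_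
            have hy1 : ‖y‖ ≤ 1 := by
              have := mem_ball_zero_iff.1 hy; linarith
            have h1 : |heatAux_hh n x - heatAux_hh n (x - y)| * w y
                ≤ heatAux_GG n x * ‖y‖ ^ (1 - (n : ℝ) - s) := by
              have h2 := heatAux_small_y ((4 * Real.pi) ^ (-(n : ℝ) / 2)) (by positivity) x y hy1
              have h3 : |heatAux_hh n x - heatAux_hh n (x - y)| ≤ ‖y‖ * heatAux_GG n x := h2
              calc |heatAux_hh n x - heatAux_hh n (x - y)| * w y ≤ (‖y‖ * heatAux_GG n x) * w y :=
                    mul_le_mul_of_nonneg_right h3 (hw_nonneg y)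
                _ = heatAux_GG n x * (‖y‖ * ‖y‖ ^ (-(n : ℝ) - s)) := by ring
                _ = heatAux_GG n x * ‖y‖ ^ (1 - (n : ℝ) - s) := by
                    congr 1
                    rcases eq_or_ne y 0 with rfl | hy0
                    · rw [norm_zero, Real.zero_rpow (by intro h; linarith),
                        Real.zero_rpow (by intro h; linarith)]
                      ring
                    · rw [show (1 - (n : ℝ) - s) = 1 + (-(n : ℝ) - s) by ring,
                        Real.rpow_add (norm_pos_iff.2 hy0), Real.rpow_one]
            calc ENNReal.ofReal (|heatAux_hh n x - heatAux_hh n (x - y)| * w y)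
                ≤ ENNReal.ofReal (heatAux_GG n x * ‖y‖ ^ (1 - (n : ℝ) - s)) :=
                  ENNReal.ofReal_le_ofReal h1
              _ = ENNReal.ofReal (heatAux_GG n x) * ENNReal.ofReal (‖y‖ ^ (1 - (n : ℝ) - s)) :=
                  ENNReal.ofReal_mul (by unfold heatAux_GG; positivity)
        _ = ENNReal.ofReal (heatAux_GG n x) * A := by
            rw [hA, lintegral_const_mul' _ _ ENNReal.ofReal_ne_top]
    · calc (∫⁻ y : E in Sᶜ, ENNReal.ofReal (|heatAux_hh n x - heatAux_hh n (x - y)| * w y))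
          ≤ ∫⁻ y : E in Sᶜ, (ENNReal.ofReal (heatAux_hh n x) * ENNReal.ofReal (w y)
              + ENNReal.ofReal (heatAux_hh n (x - y)) * ENNReal.ofReal (w y)) := by
            refine setLIntegral_mono' measurableSet_ball.compl fun y _ => ?_
            have h1 : |heatAux_hh n x - heatAux_hh n (x - y)| * w y
                ≤ (heatAux_hh n x + heatAux_hh n (x - y)) * w y := by
              apply mul_le_mul_of_nonneg_right _ (hw_nonneg y)
              calc |heatAux_hh n x - heatAux_hh n (x - y)|
                  ≤ |heatAux_hh n x| + |heatAux_hh n (x - y)| := abs_sub _ _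
                _ = heatAux_hh n x + heatAux_hh n (x - y) := by
                    rw [abs_of_nonneg (heatAux_hh_nonneg x), abs_of_nonneg (heatAux_hh_nonneg _)]
            calc ENNReal.ofReal (|heatAux_hh n x - heatAux_hh n (x - y)| * w y)
                ≤ ENNReal.ofReal ((heatAux_hh n x + heatAux_hh n (x - y)) * w y) :=
                  ENNReal.ofReal_le_ofReal h1
              _ = ENNReal.ofReal (heatAux_hh n x * w y + heatAux_hh n (x - y) * w y) := by ring_nf
              _ ≤ ENNReal.ofReal (heatAux_hh n x * w y)
                  + ENNReal.ofReal (heatAux_hh n (x - y) * w y) := ENNReal.ofReal_add_le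
              _ = ENNReal.ofReal (heatAux_hh n x) * ENNReal.ofReal (w y)
                  + ENNReal.ofReal (heatAux_hh n (x - y)) * ENNReal.ofReal (w y) := by
                  rw [ENNReal.ofReal_mul (heatAux_hh_nonneg x),
                    ENNReal.ofReal_mul (heatAux_hh_nonneg _)]
        _ = ENNReal.ofReal (heatAux_hh n x) * B
            + ∫⁻ y : E in Sᶜ, ENNReal.ofReal (heatAux_hh n (x - y)) * ENNReal.ofReal (w y) := by
            rw [lintegral_add_left
              (f := fun y : E => ENNReal.ofReal (heatAux_hh n x) * ENNReal.ofReal (w y))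
              (hw_meas.ennreal_ofReal.const_mul _)]
            congr 1
            rw [hB, lintegral_const_mul' _ _ ENNReal.ofReal_ne_top]
  have swap_bd : (∫⁻ x : E, ∫⁻ y : E in Sᶜ,
      ENNReal.ofReal (heatAux_hh n (x - y)) * ENNReal.ofReal (w y)) = B * Kh := by
    have h1 : ∀ x : E, (∫⁻ y : E in Sᶜ,
        ENNReal.ofReal (heatAux_hh n (x - y)) * ENNReal.ofReal (w y))
        = ∫⁻ y : E, Sᶜ.indicator
            (fun z => ENNReal.ofReal (heatAux_hh n (x - z)) * ENNReal.ofReal (w z)) y := by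
      intro x
      rw [lintegral_indicator measurableSet_ball.compl]
    simp_rw [h1]
    rw [lintegral_lintegral_swap]
    · have h2 : ∀ y : E, (∫⁻ x : E, Sᶜ.indicator
          (fun z => ENNReal.ofReal (heatAux_hh n (x - z)) * ENNReal.ofReal (w z)) y)
          = Sᶜ.indicator (fun z => ENNReal.ofReal (w z) * Kh) y := by
        intro y
        rcases em (y ∈ Sᶜ) with hy | hy
        · simp only [indicator_of_mem hy]
          rw [lintegral_mul_const' _ _ ENNReal.ofReal_ne_top, mul_comm]
          congr 1
          rw [hKh]
          simp_rw [sub_eq_add_neg]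
          exact lintegral_add_right_eq_self (fun x => ENNReal.ofReal (heatAux_hh n x)) (-y)
        · simp only [indicator_of_notMem hy, lintegral_const, zero_mul]
      simp_rw [h2]
      rw [lintegral_indicator measurableSet_ball.compl,
        lintegral_mul_const' _ _ hKh_fin.ne]
    · apply Measurable.aemeasurable
      have huncurry : (Function.uncurry fun (x : E) =>
            Sᶜ.indicator fun y => ENNReal.ofReal (heatAux_hh n (x - y)) * ENNReal.ofReal (w y))
          = fun p : E × E => ENNReal.ofReal (heatAux_hh n (p.1 - p.2))
              * Sᶜ.indicator (fun z => ENNReal.ofReal (w z)) p.2 := by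
        funext p
        show Sᶜ.indicator
          (fun y => ENNReal.ofReal (heatAux_hh n (p.1 - y)) * ENNReal.ofReal (w y)) p.2 = _
        rcases em (p.2 ∈ Sᶜ) with hy | hy
        · rw [indicator_of_mem hy, indicator_of_mem hy]
        · rw [indicator_of_notMem hy, indicator_of_notMem hy, mul_zero]
      rw [huncurry]
      exact ((heatAux_hh_meas.comp (measurable_fst.sub measurable_snd)).ennreal_ofReal).mul
        ((hw_meas.ennreal_ofReal.indicator measurableSet_ball.compl).comp measurable_snd)
  calc (∫⁻ x : E, ∫⁻ y : E, ENNReal.ofReal (|heatAux_hh n x - heatAux_hh n (x - y)| * w y))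
      ≤ ∫⁻ x : E, (ENNReal.ofReal (heatAux_GG n x) * A + (ENNReal.ofReal (heatAux_hh n x) * B
          + ∫⁻ y : E in Sᶜ, ENNReal.ofReal (heatAux_hh n (x - y)) * ENNReal.ofReal (w y))) :=
        lintegral_mono inner_bd
    _ = KG * A + (Kh * B + B * Kh) := by
        rw [lintegral_add_left (f := fun x : E => ENNReal.ofReal (heatAux_GG n x) * A)
            (heatAux_GG_meas.ennreal_ofReal.mul_const _),
          lintegral_add_left (f := fun x : E => ENNReal.ofReal (heatAux_hh n x) * B)
            (heatAux_hh_meas.ennreal_ofReal.mul_const _)]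
        rw [lintegral_mul_const' _ _ hA_fin.ne, lintegral_mul_const' _ _ hB_fin.ne, swap_bd]
    _ < ∞ := by
        apply ENNReal.add_lt_top.2
        refine ⟨ENNReal.mul_lt_top hKG_fin hA_fin, ENNReal.add_lt_top.2
          ⟨ENNReal.mul_lt_top hKh_fin hB_fin, ENNReal.mul_lt_top hB_fin hKh_fin⟩⟩

lemma heatAux_pointwise_scale (s t : ℝ) (ht : 0 < t) (x y : EuclideanSpace ℝ (Fin n)) :
    |(4 * Real.pi * t) ^ (-(n : ℝ) / 2) * Real.exp (-‖(Real.sqrt t) • x‖ ^ 2 / (4 * t))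
        - (4 * Real.pi * t) ^ (-(n : ℝ) / 2)
          * Real.exp (-‖(Real.sqrt t) • x - (Real.sqrt t) • y‖ ^ 2 / (4 * t))|
      * ‖(Real.sqrt t) • y‖ ^ (-(n : ℝ) - s)
    = (t ^ (-(n : ℝ) / 2) * t ^ ((-(n : ℝ) - s) / 2))
      * (|heatAux_hh n x - heatAux_hh n (x - y)| * ‖y‖ ^ (-(n : ℝ) - s)) := by
  have hst : (0:ℝ) < Real.sqrt t := Real.sqrt_pos.2 ht
  have hnorm : ∀ z : EuclideanSpace ℝ (Fin n), ‖(Real.sqrt t) • z‖ = Real.sqrt t * ‖z‖ := by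
    intro z; rw [norm_smul, Real.norm_eq_abs, abs_of_pos hst]
  have hsq : ∀ z : EuclideanSpace ℝ (Fin n),
      -‖(Real.sqrt t) • z‖ ^ 2 / (4 * t) = -‖z‖ ^ 2 / 4 := by
    intro z
    rw [hnorm, mul_pow, Real.sq_sqrt ht.le]
    field_simp
  have hc : (4 * Real.pi * t) ^ (-(n : ℝ) / 2)
      = (4 * Real.pi) ^ (-(n : ℝ) / 2) * t ^ (-(n : ℝ) / 2) :=
    Real.mul_rpow (by positivity) ht.le
  have hwsc : ‖(Real.sqrt t) • y‖ ^ (-(n : ℝ) - s)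
      = t ^ ((-(n : ℝ) - s) / 2) * ‖y‖ ^ (-(n : ℝ) - s) := by
    rw [hnorm, Real.mul_rpow (Real.sqrt_nonneg t) (norm_nonneg y), Real.sqrt_eq_rpow,
      ← Real.rpow_mul ht.le]
    ring_nf
  have hsmulsub : (Real.sqrt t) • x - (Real.sqrt t) • y = (Real.sqrt t) • (x - y) :=
    (smul_sub _ _ _).symm
  rw [hc, hsq x, hsmulsub, hsq (x - y), hwsc]
  have htpos : (0:ℝ) < t ^ (-(n : ℝ) / 2) := Real.rpow_pos_of_pos ht _
  unfold heatAux_hh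
  rw [show (4 * Real.pi) ^ (-(n : ℝ) / 2) * t ^ (-(n : ℝ) / 2) * Real.exp (-‖x‖ ^ 2 / 4)
      - (4 * Real.pi) ^ (-(n : ℝ) / 2) * t ^ (-(n : ℝ) / 2) * Real.exp (-‖x - y‖ ^ 2 / 4)
    = t ^ (-(n : ℝ) / 2) * ((4 * Real.pi) ^ (-(n : ℝ) / 2) * Real.exp (-‖x‖ ^ 2 / 4)
      - (4 * Real.pi) ^ (-(n : ℝ) / 2) * Real.exp (-‖x - y‖ ^ 2 / 4)) by ring,
    abs_mul, abs_of_pos htpos]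
  ring

end HeatKernelAux

/-- Homogeneous Besov bound `‖h_t‖_{Ḃ^{s,1}_1} ≤ C t^{-s/2}` for the heat kernel on `ℝⁿ`. -/
theorem heat_kernel_besov_bound
    (n : ℕ) (hn : 1 ≤ n) (s : ℝ) (hs0 : 0 < s) (hs1 : s < 1) :
    ∃ C : ℝ, 0 < C ∧ ∀ t : ℝ, 0 < t →
      (∫⁻ x : EuclideanSpace ℝ (Fin n), ∫⁻ y : EuclideanSpace ℝ (Fin n),
          ENNReal.ofReal
            (|(4 * Real.pi * t) ^ (-(n : ℝ) / 2) * Real.exp (-‖x‖ ^ 2 / (4 * t))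
                - (4 * Real.pi * t) ^ (-(n : ℝ) / 2) * Real.exp (-‖x - y‖ ^ 2 / (4 * t))|
              * ‖y‖ ^ (-(n : ℝ) - s)))
        ≤ ENNReal.ofReal (C * t ^ (-s / 2)) := by
  set I1 : ℝ≥0∞ := ∫⁻ x : EuclideanSpace ℝ (Fin n), ∫⁻ y : EuclideanSpace ℝ (Fin n),
      ENNReal.ofReal (|heatAux_hh n x - heatAux_hh n (x - y)| * ‖y‖ ^ (-(n : ℝ) - s)) with hI1def
  have hI1 : I1 < ∞ := heatAux_I1_lt_top hn hs0 hs1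
  refine ⟨I1.toReal + 1, by positivity, fun t ht => ?_⟩
  have hst : (0:ℝ) < Real.sqrt t := Real.sqrt_pos.2 ht
  set F : EuclideanSpace ℝ (Fin n) → EuclideanSpace ℝ (Fin n) → ℝ≥0∞ := fun x y =>
    ENNReal.ofReal
      (|(4 * Real.pi * t) ^ (-(n : ℝ) / 2) * Real.exp (-‖x‖ ^ 2 / (4 * t))
          - (4 * Real.pi * t) ^ (-(n : ℝ) / 2) * Real.exp (-‖x - y‖ ^ 2 / (4 * t))|
        * ‖y‖ ^ (-(n : ℝ) - s)) with hFdef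
  have hFm : Measurable (Function.uncurry F) := by
    unfold Function.uncurry
    rw [hFdef]
    fun_prop
  have hm1 : Measurable fun x => ∫⁻ y, F x y := hFm.lintegral_prod_right
  have step1 : (∫⁻ x, ∫⁻ y, F x y)
      = ENNReal.ofReal (Real.sqrt t ^ n) * ∫⁻ x, ∫⁻ y, F (Real.sqrt t • x) y :=
    heatAux_lint_smul _ hm1 hst
  have step2 : ∀ x, (∫⁻ y, F (Real.sqrt t • x) y)
      = ENNReal.ofReal (Real.sqrt t ^ n) * ∫⁻ y, F (Real.sqrt t • x) (Real.sqrt t • y) := by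
    intro x
    exact heatAux_lint_smul _ (hFm.comp (measurable_prodMk_left)) hst
  have hpt : ∀ x y, F (Real.sqrt t • x) (Real.sqrt t • y)
      = ENNReal.ofReal (t ^ (-(n : ℝ) / 2) * t ^ ((-(n : ℝ) - s) / 2))
        * ENNReal.ofReal (|heatAux_hh n x - heatAux_hh n (x - y)| * ‖y‖ ^ (-(n : ℝ) - s)) := by
    intro x y
    rw [hFdef]
    simp only
    rw [heatAux_pointwise_scale s t ht x y, ENNReal.ofReal_mul (by positivity)]
  have hconst : ENNReal.ofReal (Real.sqrt t ^ n) * (ENNReal.ofReal (Real.sqrt t ^ n)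
      * (ENNReal.ofReal (t ^ (-(n : ℝ) / 2) * t ^ ((-(n : ℝ) - s) / 2))))
      = ENNReal.ofReal (t ^ (-s / 2)) := by
    rw [← ENNReal.ofReal_mul (by positivity), ← ENNReal.ofReal_mul (by positivity)]
    congr 1
    have hsn : Real.sqrt t ^ n = t ^ ((n : ℝ) / 2) := by
      rw [Real.sqrt_eq_rpow, ← Real.rpow_natCast (t ^ ((1:ℝ)/2)) n, ← Real.rpow_mul ht.le]
      congr 1
      ring
    rw [hsn, ← Real.rpow_add ht, ← Real.rpow_add ht, ← Real.rpow_add ht]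
    congr 1
    ring
  calc (∫⁻ x, ∫⁻ y, F x y)
      = ENNReal.ofReal (Real.sqrt t ^ n) * ∫⁻ x, ∫⁻ y, F (Real.sqrt t • x) y := step1
    _ = ENNReal.ofReal (Real.sqrt t ^ n) * (ENNReal.ofReal (Real.sqrt t ^ n)
        * ∫⁻ x, ∫⁻ y, F (Real.sqrt t • x) (Real.sqrt t • y)) := by
        rw [lintegral_congr step2, lintegral_const_mul' _ _ ENNReal.ofReal_ne_top]
    _ = ENNReal.ofReal (Real.sqrt t ^ n) * (ENNReal.ofReal (Real.sqrt t ^ n)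
        * (ENNReal.ofReal (t ^ (-(n : ℝ) / 2) * t ^ ((-(n : ℝ) - s) / 2)) * I1)) := by
        congr 1
        congr 1
        calc (∫⁻ x, ∫⁻ y, F (Real.sqrt t • x) (Real.sqrt t • y))
            = ∫⁻ x, ENNReal.ofReal (t ^ (-(n : ℝ) / 2) * t ^ ((-(n : ℝ) - s) / 2))
              * ∫⁻ y, ENNReal.ofReal
                  (|heatAux_hh n x - heatAux_hh n (x - y)| * ‖y‖ ^ (-(n : ℝ) - s)) := by
              refine lintegral_congr fun x => ?_
              simp_rw [hpt x]
              rw [lintegral_const_mul' _ _ ENNReal.ofReal_ne_top]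
          _ = ENNReal.ofReal (t ^ (-(n : ℝ) / 2) * t ^ ((-(n : ℝ) - s) / 2)) * I1 := by
              rw [lintegral_const_mul' _ _ ENNReal.ofReal_ne_top, hI1def]
    _ = ENNReal.ofReal (t ^ (-s / 2)) * I1 := by rw [← mul_assoc, ← mul_assoc, ← hconst]; ring
    _ ≤ ENNReal.ofReal (t ^ (-s / 2)) * ENNReal.ofReal (I1.toReal + 1) := by
        gcongr
        exact ((ENNReal.ofReal_toReal hI1.ne).symm.le).trans
          (ENNReal.ofReal_le_ofReal (by linarith))
    _ = ENNReal.ofReal ((I1.toReal + 1) * t ^ (-s / 2)) := by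
        rw [← ENNReal.ofReal_mul (by positivity), mul_comm]
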